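/- Let L be the finitary first-order language with exactly one binary relation symbol <. Let φ be the L-sentence asserting: if < is a (strict) linear order, then it has no least element or no greatest element. Let T be the L-theory {σ_n : n < ω}, where σ_n asserts: if < is a (strict) linear order, then there are at least n elements. Then: (a) T expresses θ(φ), i.e., for every nonempty L-structure A, A ⊨ T iff some nonempty substructure of A satisfies φ; and (b) no single L-sentence expresses θ(φ). -/

import Mathlib

/- STATEMENT 4: Over the language with one binary relation symbol <, with
φ = "if < is a strict linear order then it has no least or no greatest element" and
T = {σ_n : n < ω} where σ_n = "if < is a strict linear order then there are ≥ n elements",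
(a) T expresses θ(φ), and (b) no single sentence expresses θ(φ). -/

open FirstOrder Language

namespace SatSub

/-- The language with a single binary relation symbol `<`. -/
def ordL : FirstOrder.Language :=
  ⟨fun _ => Empty, fun n => match n with | 2 => PUnit | _ => Empty⟩

/-- The binary relation symbol `<` of `ordL`. -/
def ltR : ordL.Relations 2 := PUnit.unit

/-- The sentence asserting that `<` is a strict linear order:
irreflexive, transitive and total (trichotomy). -/
def linOrd : ordL.Sentence :=
  (∀' ∼(ltR.boundedFormula₂ &0 &0)) ⊓
    (∀' ∀' ∀' ((ltR.boundedFormula₂ &0 &1 ⊓ ltR.boundedFormula₂ &1 &2) ⟹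
      ltR.boundedFormula₂ &0 &2)) ⊓
    (∀' ∀' (ltR.boundedFormula₂ &0 &1 ⊔ (&0 =' &1) ⊔ ltR.boundedFormula₂ &1 &0))

/-- "There is a least element". -/
def hasLeast : ordL.Sentence :=
  ∃' ∀' (ltR.boundedFormula₂ &0 &1 ⊔ (&0 =' &1))

/-- "There is a greatest element". -/
def hasGreatest : ordL.Sentence :=
  ∃' ∀' (ltR.boundedFormula₂ &1 &0 ⊔ (&0 =' &1))

/-- φ: if `<` is a strict linear order, then it has no least or no greatest element. -/
def phi : ordL.Sentence := linOrd ⟹ (∼hasLeast ⊔ ∼hasGreatest)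

/-- σ_n: if `<` is a strict linear order, then there are at least `n` elements. -/
def sigma (n : ℕ) : ordL.Sentence := linOrd ⟹ Sentence.cardGe ordL n

/-- The theory T = {σ_n : n < ω}. -/
def T : ordL.Theory := Set.range sigma


section lemmas
variable {M : Type*} [ordL.Structure M]
def rel (a b : M) : Prop := Structure.RelMap ltR ![a,b]

lemma realize_linOrd : M ⊨ linOrd ↔ ((∀ a : M, ¬ rel a a) ∧ (∀ a b c : M, rel a b → rel b c → rel a c) ∧ (∀ a b : M, rel a b ∨ a = b ∨ rel b a)) := by
  simp [linOrd, rel, Sentence.Realize, Formula.Realize, Fin.snoc, and_assoc, or_assoc]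

lemma realize_hasLeast : M ⊨ hasLeast ↔ ∃ x : M, ∀ y : M, rel x y ∨ x = y := by
  simp [hasLeast, rel, Sentence.Realize, Formula.Realize, Fin.snoc]

lemma realize_hasGreatest : M ⊨ hasGreatest ↔ ∃ x : M, ∀ y : M, rel y x ∨ x = y := by
  simp [hasGreatest, rel, Sentence.Realize, Formula.Realize, Fin.snoc]

lemma realize_phi : M ⊨ phi ↔ (M ⊨ linOrd → (¬ M ⊨ hasLeast ∨ ¬ M ⊨ hasGreatest)) := by
  simp only [phi, Sentence.Realize, Formula.Realize, BoundedFormula.realize_imp,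
    BoundedFormula.realize_sup, BoundedFormula.realize_not]

lemma realize_sigma {n : ℕ} : M ⊨ sigma n ↔ (M ⊨ linOrd → (n : Cardinal) ≤ Cardinal.mk M) := by
  have h := Sentence.realize_cardGe (L := ordL) (M := M) n
  simp only [sigma, Sentence.Realize, Formula.Realize, BoundedFormula.realize_imp]
  exact imp_congr Iff.rfl h

lemma model_T_iff : M ⊨ T ↔ ∀ n : ℕ, M ⊨ sigma n := by
  simp [T, Theory.model_iff]

lemma rel_sub {S : ordL.Substructure M} (a b : S) : rel a b ↔ rel (a : M) (b : M) := by
  have : (fun i => ((![a, b] i : S) : M)) = ![(a : M), (b : M)] := by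
    funext i; fin_cases i <;> rfl
  simp only [rel, Substructure.inducedStructure]
  change Structure.RelMap (M := M) ltR (fun i => ((![a, b] i : S) : M)) ↔ _
  rw [this]

def subOf (s : Set M) : ordL.Substructure M where
  carrier := s
  fun_mem := fun f => f.elim

@[simp] lemma mem_subOf {s : Set M} {x : M} : x ∈ subOf s ↔ x ∈ s := Iff.rfl

end lemmas

lemma infinite_of_descending {N : Type*} [Nonempty N] (r : N → N → Prop)
    (hirr : ∀ a, ¬ r a a) (htr : ∀ a b c, r a b → r b c → r a c)
    (hdesc : ∀ x : N, ∃ y, r y x) : Infinite N := by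
  classical
  let f : ℕ → N := fun n => Nat.rec (Classical.arbitrary N) (fun _ x => (hdesc x).choose) n
  have hstep : ∀ n, r (f (n+1)) (f n) := fun n => (hdesc (f n)).choose_spec
  have hd : ∀ d m : ℕ, r (f (m + d + 1)) (f m) := by
    intro d
    induction d with
    | zero => intro m; exact hstep m
    | succ d ih => intro m; exact htr _ _ _ (hstep (m + d + 1)) (ih m)
  have hlt : ∀ m n : ℕ, m < n → r (f n) (f m) := by
    intro m n h
    have : n = m + (n - m - 1) + 1 := by omega
    rw [this]; exact hd _ m
  refine Infinite.of_injective f fun m n hmn => ?_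
  by_contra hne
  rcases Nat.lt_or_ge m n with h | h
  · have := hlt m n h; rw [hmn] at this; exact hirr _ this
  · have := hlt n m (lt_of_le_of_ne h (Ne.symm hne)); rw [← hmn] at this; exact hirr _ this


lemma sub_linOrd {M : Type*} [ordL.Structure M] (hlin : M ⊨ linOrd)
    (S : ordL.Substructure M) : S ⊨ linOrd := by
  obtain ⟨hirr, htr, htot⟩ := realize_linOrd.mp hlin
  refine realize_linOrd.mpr ⟨?_, ?_, ?_⟩
  · intro a ha; exact hirr _ ((rel_sub _ _).mp ha)
  · intro a b c hab hbc
    exact (rel_sub _ _).mpr (htr _ _ _ ((rel_sub _ _).mp hab) ((rel_sub _ _).mp hbc))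
  · intro a b
    rcases htot (a : M) (b : M) with h | h | h
    · exact Or.inl ((rel_sub _ _).mpr h)
    · exact Or.inr (Or.inl (Subtype.ext h))
    · exact Or.inr (Or.inr ((rel_sub _ _).mpr h))

lemma partA (M : Type) [ordL.Structure M] [Nonempty M] :
    M ⊨ T ↔ ∃ S : ordL.Substructure M, Nonempty S ∧ S ⊨ phi := by
  constructor
  · intro hT
    by_cases hlin : M ⊨ linOrd
    · haveI hinf : Infinite M := by
        rw [Cardinal.infinite_iff, Cardinal.aleph0_le]
        intro n
        exact (realize_sigma.mp ((model_T_iff.mp hT) n)) hlin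
      obtain ⟨hirr, htr, htot⟩ := realize_linOrd.mp hlin
      set A : Set M := {x : M | {y : M | rel y x}.Finite} with hAdef
      by_cases hA : A.Infinite
      · obtain ⟨a, ha⟩ := hA.nonempty
        refine ⟨subOf A, ⟨⟨a, ha⟩⟩, ?_⟩
        rw [realize_phi]; intro _; right
        rw [realize_hasGreatest]; rintro ⟨g, hg⟩
        apply hA
        have hsub : A ⊆ {y : M | rel y (g : M)} ∪ {(g : M)} := by
          intro y hy
          rcases hg ⟨y, hy⟩ with h | h
          · exact Or.inl ((rel_sub _ _).mp h)
          · exact Or.inr (Subtype.ext_iff.mp h).symm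
        exact Set.Finite.subset (Set.Finite.union g.2 (Set.finite_singleton _)) hsub
      · have hAfin : A.Finite := Set.not_infinite.mp hA
        have hBinf : Aᶜ.Infinite := hAfin.infinite_compl
        obtain ⟨a, ha⟩ := hBinf.nonempty
        refine ⟨subOf Aᶜ, ⟨⟨a, ha⟩⟩, ?_⟩
        rw [realize_phi]; intro _; left
        rw [realize_hasLeast]; rintro ⟨l, hl⟩
        have hlB : ¬ {y : M | rel y (l : M)}.Finite := l.2
        apply hlB
        refine Set.Finite.subset hAfin ?_
        intro y hy
        by_contra hyA
        rcases hl ⟨y, hyA⟩ with h | h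
        · exact hirr y (htr _ _ _ hy ((rel_sub _ _).mp h))
        · have : (l : M) = y := Subtype.ext_iff.mp h
          exact hirr (l : M) (this ▸ hy)
    · rw [realize_linOrd] at hlin
      by_cases h1 : ∀ a : M, ¬ rel a a
      · by_cases h2 : ∀ a b c : M, rel a b → rel b c → rel a c
        · have h3 : ¬ ∀ a b : M, rel a b ∨ a = b ∨ rel b a := fun h => hlin ⟨h1, h2, h⟩
          push_neg at h3
          obtain ⟨a, b, hab, hne, hba⟩ := h3
          refine ⟨subOf {a, b}, ⟨⟨a, by simp⟩⟩, ?_⟩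
          rw [realize_phi]; intro hl; exfalso
          obtain ⟨_, _, htot⟩ := realize_linOrd.mp hl
          rcases htot ⟨a, by simp⟩ ⟨b, by simp⟩ with h | h | h
          · exact hab ((rel_sub _ _).mp h)
          · exact hne (Subtype.ext_iff.mp h)
          · exact hba ((rel_sub _ _).mp h)
        · push_neg at h2
          obtain ⟨a, b, c, hab, hbc, hnac⟩ := h2
          refine ⟨subOf {a, b, c}, ⟨⟨a, by simp⟩⟩, ?_⟩
          rw [realize_phi]; intro hl; exfalso
          obtain ⟨_, htr', _⟩ := realize_linOrd.mp hl
          exact hnac ((rel_sub _ _).mp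
            (htr' ⟨a, by simp⟩ ⟨b, by simp⟩ ⟨c, by simp⟩
              ((rel_sub _ _).mpr hab) ((rel_sub _ _).mpr hbc)))
      · push_neg at h1
        obtain ⟨a, ha⟩ := h1
        refine ⟨subOf {a}, ⟨⟨a, by simp⟩⟩, ?_⟩
        rw [realize_phi]; intro hl; exfalso
        obtain ⟨hirr', _, _⟩ := realize_linOrd.mp hl
        exact hirr' ⟨a, by simp⟩ ((rel_sub _ _).mpr ha)
  · rintro ⟨S, hne, hphi⟩
    rw [model_T_iff]
    intro n
    rw [realize_sigma]
    intro hlin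
    haveI := hne
    have hlinS : S ⊨ linOrd := sub_linOrd hlin S
    obtain ⟨hirrS, htrS, htotS⟩ := realize_linOrd.mp hlinS
    have hinfS : Infinite S := by
      rcases realize_phi.mp hphi hlinS with h | h
      · rw [realize_hasLeast] at h
        push_neg at h
        refine infinite_of_descending (fun a b : S => rel a b) hirrS htrS ?_
        intro x
        obtain ⟨y, hy1, hy2⟩ := h x
        rcases htotS x y with h' | h' | h'
        · exact absurd h' hy1
        · exact absurd h' hy2
        · exact ⟨y, h'⟩
      · rw [realize_hasGreatest] at h
        push_neg at h
        refine infinite_of_descending (fun a b : S => rel b a) hirrS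
          (fun a b c hab hbc => htrS _ _ _ hbc hab) ?_
        intro x
        obtain ⟨y, hy1, hy2⟩ := h x
        rcases htotS x y with h' | h' | h'
        · exact ⟨y, h'⟩
        · exact absurd h' hy2
        · exact absurd h' hy1
    have hinfM : Infinite M := Infinite.of_injective (fun x : S => (x : M)) Subtype.coe_injective
    exact le_trans (le_of_lt (Cardinal.nat_lt_aleph0 n)) (Cardinal.infinite_iff.mp hinfM)


def mkStruct {M : Type*} (r : M → M → Prop) : ordL.Structure M where
  funMap := fun {n} f _ => f.elim
  RelMap := fun {n} R x =>
    match n, R with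
    | 2, _ => r (x 0) (x 1)
    | 0, R => R.elim
    | 1, R => R.elim
    | (_ + 3), R => R.elim

lemma mkStruct_rel {M : Type*} (r : M → M → Prop) (a b : M) :
    @rel M (mkStruct r) a b ↔ r a b := Iff.rfl

lemma partB : ¬ ∃ χ : ordL.Sentence,
    ∀ (M : Type) [ordL.Structure M] [Nonempty M],
      M ⊨ χ ↔ ∃ S : ordL.Substructure M, Nonempty S ∧ S ⊨ phi := by
  classical
  rintro ⟨χ, hχ⟩
  have hunsat : ¬ (T ∪ {BoundedFormula.not χ}).IsSatisfiable := by
    rintro ⟨N⟩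
    have h1 : (N : Type) ⊨ T := N.is_model.mono Set.subset_union_left
    have h2 : (N : Type) ⊨ BoundedFormula.not χ :=
      (T ∪ {BoundedFormula.not χ}).realize_sentence_of_mem
        (Set.mem_union_right _ (Set.mem_singleton _))
    rw [Sentence.realize_not] at h2
    exact h2 ((hχ N).mpr ((partA N).mp h1))
  rw [Theory.isSatisfiable_iff_isFinitelySatisfiable, Theory.IsFinitelySatisfiable] at hunsat
  push_neg at hunsat
  obtain ⟨T0, hsub, hT0⟩ := hunsat
  set g : ordL.Sentence → ℕ :=
    fun s => if h : ∃ n, s = sigma n then h.choose else 0 with hg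
  set Nn : ℕ := T0.sup g + 1 with hNn
  letI : ordL.Structure (Fin Nn) := mkStruct (· < ·)
  haveI : Nonempty (Fin Nn) := ⟨⟨0, by omega⟩⟩
  have hlinF : (Fin Nn) ⊨ linOrd := by
    refine realize_linOrd.mpr ⟨?_, ?_, ?_⟩
    · intro a; rw [mkStruct_rel]; exact lt_irrefl a
    · intro a b c hab hbc
      rw [mkStruct_rel] at *
      exact lt_trans hab hbc
    · intro a b
      simp only [mkStruct_rel]
      exact lt_trichotomy a b
  have hnotT : ¬ (Fin Nn) ⊨ T := by
    intro h
    have := realize_sigma.mp (model_T_iff.mp h (Nn + 1)) hlinF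
    rw [Cardinal.mk_fin] at this
    have := Nat.cast_le.mp this
    omega
  have hmodel : (Fin Nn) ⊨ (T0 : ordL.Theory) := by
    rw [Theory.model_iff]
    intro s hs
    rcases hsub hs with h | h
    · obtain ⟨m, hm⟩ := h
      have hex : ∃ n, s = sigma n := ⟨m, hm.symm⟩
      have hgs : s = sigma (g s) := by
        rw [hg]; simp only []
        rw [dif_pos hex]
        exact hex.choose_spec
      rw [hgs, realize_sigma]
      intro _
      rw [Cardinal.mk_fin]
      have hb : g s ≤ T0.sup g := Finset.le_sup hs
      exact_mod_cast (by omega : g s ≤ Nn)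
    · rw [Set.mem_singleton_iff] at h
      subst h
      rw [Sentence.realize_not]
      intro hc
      exact hnotT ((partA (Fin Nn)).mpr ((hχ (Fin Nn)).mp hc))
  haveI := hmodel
  exact hT0 (Theory.Model.isSatisfiable (Fin Nn))


theorem theory_expresses_theta_but_no_sentence_does :
    (∀ (M : Type) [ordL.Structure M] [Nonempty M],
        M ⊨ T ↔ ∃ S : ordL.Substructure M, Nonempty S ∧ S ⊨ phi) ∧
      ¬ ∃ χ : ordL.Sentence,
        ∀ (M : Type) [ordL.Structure M] [Nonempty M],
          M ⊨ χ ↔ ∃ S : ordL.Substructure M, Nonempty S ∧ S ⊨ phi :=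
  ⟨partA, partB⟩

end SatSub
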